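/- Fix an integer p ≥ 1 and reals λ_1, …, λ_p > 0, a real τ > 0, and set n = Σ_{i=1}^p λ_i/(λ_i + τ), ζ_i = τ/(λ_i + τ), Ω = (1/n) Σ_{i=1}^p (1 − ζ_i)², and Σ = diag(λ_1,…,λ_p). Fix β* ∈ ℝ^p, σ² ≥ 0, set B = Σ_{i=1}^p λ_i ζ_i² (β*_i)², and let γ² = (p/n)(σ² + B)/(1 − Ω). Let g be a standard Gaussian random vector on ℝ^p (the product of p independent standard normal distributions). Then the expectation over g of ‖Σ^{1/2}((Σ + τ I)^{-1} Σ (β* + Σ^{-1/2} (γ/√p) g) − β*)‖² equals B + γ² · tr(Σ²(Σ + τ I)^{-2})/p, which equals (σ² Ω + B)/(1 − Ω). -/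

import Mathlib

open MeasureTheory ProbabilityTheory

section MyAux
open Real Filter Topology
open scoped ENNReal NNReal

private lemma my_pdf_eq (x : ℝ) :
    gaussianPDFReal 0 1 x = (Real.sqrt (2 * π))⁻¹ * rexp (-(1/2) * x ^ 2) := by
  simp only [gaussianPDFReal, NNReal.coe_one, mul_one, sub_zero]
  congr 1
  ring

private lemma my_sq_tendsto_top : Tendsto (fun x : ℝ => x ^ 2) atTop atTop :=
  tendsto_pow_atTop two_ne_zero

private lemma my_sq_tendsto_bot : Tendsto (fun x : ℝ => x ^ 2) atBot atTop := by
  have h : Tendsto (fun x : ℝ => |x| ^ 2) atBot atTop :=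
    my_sq_tendsto_top.comp tendsto_abs_atBot_atTop
  refine h.congr fun x => sq_abs x

private lemma my_exp_tendsto (l : Filter ℝ) (h : Tendsto (fun x : ℝ => x ^ 2) l atTop) :
    Tendsto (fun x : ℝ => -rexp (-(1/2) * x ^ 2)) l (𝓝 0) := by
  have h2 : Tendsto (fun x : ℝ => -(1/2) * x ^ 2) l atBot := by
    have := tendsto_neg_atTop_atBot.comp (h.const_mul_atTop (by norm_num : (0:ℝ) < 1/2))
    refine this.congr fun x => by simp [Function.comp]
  have h3 : Tendsto (fun x : ℝ => rexp (-(1/2) * x ^ 2)) l (𝓝 0) :=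
    Real.tendsto_exp_atBot.comp h2
  simpa using h3.neg

private lemma my_deriv (x : ℝ) :
    HasDerivAt (fun x : ℝ => -rexp (-(1/2) * x ^ 2)) (x * rexp (-(1/2) * x ^ 2)) x := by
  have h : HasDerivAt (fun x : ℝ => -rexp (-(1/2) * x ^ 2)) _ x :=
    (((hasDerivAt_pow 2 x).const_mul (-(1/2:ℝ))).exp).neg
  convert h using 1
  norm_num
  ring

private lemma my_E0 : Integrable (fun x : ℝ => rexp (-(1/2) * x ^ 2)) :=
  integrable_exp_neg_mul_sq (by norm_num)

private lemma my_E1 : Integrable (fun x : ℝ => x * rexp (-(1/2) * x ^ 2)) :=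
  integrable_mul_exp_neg_mul_sq (by norm_num)

private lemma my_E2 : Integrable (fun x : ℝ => x ^ 2 * rexp (-(1/2) * x ^ 2)) := by
  have h := integrable_rpow_mul_exp_neg_mul_sq (b := 1/2) (by norm_num)
    (s := 2) (by norm_num)
  refine h.congr ?_
  filter_upwards with x
  rw [show ((2:ℝ) = ((2:ℕ):ℝ)) by norm_num, Real.rpow_natCast]

private lemma my_I0 : ∫ x : ℝ, rexp (-(1/2) * x ^ 2) = Real.sqrt (2 * π) := by
  rw [integral_gaussian]
  norm_num [mul_comm]

private lemma my_I1 : ∫ x : ℝ, x * rexp (-(1/2) * x ^ 2) = 0 := by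
  have h := integral_of_hasDerivAt_of_tendsto (m := 0) (n := 0) my_deriv
    my_E1 (my_exp_tendsto _ my_sq_tendsto_bot) (my_exp_tendsto _ my_sq_tendsto_top)
  simpa using h

private lemma my_I2 : ∫ x : ℝ, x ^ 2 * rexp (-(1/2) * x ^ 2) = Real.sqrt (2 * π) := by
  have huv' : Integrable ((fun x : ℝ => x) * fun x : ℝ => x * rexp (-(1/2) * x ^ 2)) := by
    refine my_E2.congr ?_
    filter_upwards with x
    simp [Pi.mul_apply]; ring
  have hu'v : Integrable ((fun _ : ℝ => (1:ℝ)) * fun x : ℝ => -rexp (-(1/2) * x ^ 2)) := by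
    refine my_E0.neg.congr ?_
    filter_upwards with x
    simp [Pi.mul_apply]
  have huv : Integrable ((fun x : ℝ => x) * fun x : ℝ => -rexp (-(1/2) * x ^ 2)) := by
    refine my_E1.neg.congr ?_
    filter_upwards with x
    simp [Pi.mul_apply]
  have h := integral_mul_deriv_eq_deriv_mul_of_integrable (u := fun x : ℝ => x)
    (v := fun x : ℝ => -rexp (-(1/2) * x ^ 2)) (u' := fun _ => (1:ℝ))
    (v' := fun x : ℝ => x * rexp (-(1/2) * x ^ 2))
    (fun x _ => hasDerivAt_id x) (fun x _ => my_deriv x) huv' hu'v huv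
  have h2 : ∫ x : ℝ, x * (x * rexp (-(1/2) * x ^ 2)) = ∫ x : ℝ, x ^ 2 * rexp (-(1/2) * x ^ 2) := by
    congr 1; funext x; ring
  rw [h2] at h
  rw [h, ← my_I0]
  rw [← integral_neg]
  congr 1; funext x; simp

private lemma my_gauss_eq : gaussianReal 0 1
    = (volume : Measure ℝ).withDensity (fun x => ((gaussianPDFReal 0 1 x).toNNReal : ℝ≥0∞)) := by
  rw [gaussianReal_of_var_ne_zero 0 one_ne_zero]
  rfl

private lemma my_f_meas : Measurable (fun x => (gaussianPDFReal 0 1 x).toNNReal) :=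
  (measurable_gaussianPDFReal 0 1).real_toNNReal

private lemma my_comb (a b : ℝ) (x : ℝ) : gaussianPDFReal 0 1 x * (a + b * x) ^ 2
    = (Real.sqrt (2 * π))⁻¹ * (a ^ 2 * rexp (-(1/2) * x ^ 2)
        + (2 * a * b) * (x * rexp (-(1/2) * x ^ 2))
        + b ^ 2 * (x ^ 2 * rexp (-(1/2) * x ^ 2))) := by
  rw [my_pdf_eq]
  ring

private lemma my_pdf_smul (g : ℝ → ℝ) (x : ℝ) :
    (gaussianPDFReal 0 1 x).toNNReal • g x = gaussianPDFReal 0 1 x * g x := by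
  simp [NNReal.smul_def, Real.coe_toNNReal _ (gaussianPDFReal_nonneg 0 1 x)]

private lemma my_int_comb (a b : ℝ) :
    Integrable (fun x : ℝ => gaussianPDFReal 0 1 x * (a + b * x) ^ 2) := by
  simp only [my_comb]
  exact (((my_E0.const_mul _).add (my_E1.const_mul _)).add (my_E2.const_mul _)).const_mul _

private lemma my_gauss_integrable (a b : ℝ) :
    Integrable (fun x : ℝ => (a + b * x) ^ 2) (gaussianReal 0 1) := by
  rw [my_gauss_eq, integrable_withDensity_iff_integrable_smul my_f_meas]
  refine (my_int_comb a b).congr ?_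
  filter_upwards with x
  exact (my_pdf_smul (fun y => (a + b * y) ^ 2) x).symm

private lemma my_gauss_moment (a b : ℝ) :
    ∫ x, (a + b * x) ^ 2 ∂(gaussianReal 0 1) = a ^ 2 + b ^ 2 := by
  rw [my_gauss_eq, integral_withDensity_eq_integral_smul my_f_meas]
  have hrw : ∀ x : ℝ, (gaussianPDFReal 0 1 x).toNNReal • (a + b * x) ^ 2
      = (Real.sqrt (2 * π))⁻¹ * (a ^ 2 * rexp (-(1/2) * x ^ 2)
        + (2 * a * b) * (x * rexp (-(1/2) * x ^ 2))
        + b ^ 2 * (x ^ 2 * rexp (-(1/2) * x ^ 2))) := fun x => by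
    rw [my_pdf_smul (fun y => (a + b * y) ^ 2) x, my_comb]
  simp only [hrw]
  have hA : Integrable (fun x : ℝ => a ^ 2 * rexp (-(1/2) * x ^ 2)) := my_E0.const_mul _
  have hB : Integrable (fun x : ℝ => 2 * a * b * (x * rexp (-(1/2) * x ^ 2))) := my_E1.const_mul _
  have hC : Integrable (fun x : ℝ => b ^ 2 * (x ^ 2 * rexp (-(1/2) * x ^ 2))) := my_E2.const_mul _
  have hAB : Integrable (fun x : ℝ => a ^ 2 * rexp (-(1/2) * x ^ 2)
      + 2 * a * b * (x * rexp (-(1/2) * x ^ 2))) := hA.add hB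
  rw [integral_const_mul, integral_add hAB hC, integral_add hA hB,
    integral_const_mul, integral_const_mul, integral_const_mul, my_I0, my_I1, my_I2]
  have h : (0:ℝ) < Real.sqrt (2 * π) := Real.sqrt_pos.mpr (by positivity)
  field_simp
  ring

private lemma my_map_eval (p : ℕ) (i : Fin p) :
    (Measure.pi fun _ : Fin p => gaussianReal 0 1).map (fun g => g i) = gaussianReal 0 1 := by
  ext s hs
  rw [Measure.map_apply (measurable_pi_apply i) hs]
  have h1 : (fun g : Fin p → ℝ => g i) ⁻¹' s
      = Set.pi Set.univ (Function.update (fun _ : Fin p => Set.univ) i s) := by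
    rw [← Set.eval_preimage]
  rw [h1, Measure.pi_pi]
  have h2 : ∀ j ∈ (Finset.univ : Finset (Fin p)), j ≠ i →
      (gaussianReal 0 1) (Function.update (fun _ : Fin p => Set.univ) i s j) = 1 := by
    intro j _ hj
    rw [Function.update_of_ne hj]
    simp
  rw [Finset.prod_eq_single i h2 (fun h => absurd (Finset.mem_univ i) h)]
  all_goals rw [Function.update_self]

private lemma my_comp_integrable (p : ℕ) (i : Fin p) (a b : ℝ) :
    Integrable (fun g : Fin p → ℝ => (a + b * g i) ^ 2)
      (Measure.pi fun _ : Fin p => gaussianReal 0 1) := by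
  have hm : AEStronglyMeasurable (fun x : ℝ => (a + b * x) ^ 2)
      ((Measure.pi fun _ : Fin p => gaussianReal 0 1).map (fun g => g i)) :=
    (Continuous.aestronglyMeasurable (by continuity))
  have := (integrable_map_measure hm (measurable_pi_apply i).aemeasurable).mp
  rw [my_map_eval] at this
  exact this (my_gauss_integrable a b)

private lemma my_comp_integral (p : ℕ) (i : Fin p) (a b : ℝ) :
    ∫ g : Fin p → ℝ, (a + b * g i) ^ 2 ∂(Measure.pi fun _ : Fin p => gaussianReal 0 1)
      = a ^ 2 + b ^ 2 := by
  have hm : AEStronglyMeasurable (fun x : ℝ => (a + b * x) ^ 2)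
      ((Measure.pi fun _ : Fin p => gaussianReal 0 1).map (fun g => g i)) :=
    (Continuous.aestronglyMeasurable (by continuity))
  have h2 : ∫ x, (a + b * x) ^ 2
        ∂((Measure.pi fun _ : Fin p => gaussianReal 0 1).map (fun g => g i))
      = ∫ g : Fin p → ℝ, (a + b * g i) ^ 2 ∂(Measure.pi fun _ : Fin p => gaussianReal 0 1) :=
    integral_map (measurable_pi_apply i).aemeasurable hm
  rw [← h2, my_map_eval, my_gauss_moment]

end MyAux

/-- Gaussian-average characterization of the omniscient excess test risk
for a diagonal covariance: the expectation over a standard Gaussian `g` of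
`‖Σ^{1/2}((Σ+τI)⁻¹Σ(β* + Σ^{-1/2}(γ/√p)g) − β*)‖²` equals
`B + γ² tr(Σ²(Σ+τI)⁻²)/p = (σ²Ω + B)/(1−Ω)`. -/
theorem omniscient_risk_gaussian_average
    (p : ℕ) (hp : 1 ≤ p)
    (lam : Fin p → ℝ) (hlam : ∀ i, 0 < lam i)
    (τ : ℝ) (hτ : 0 < τ)
    (n : ℝ) (hn : n = ∑ i, lam i / (lam i + τ))
    (ζ : Fin p → ℝ) (hζ : ∀ i, ζ i = τ / (lam i + τ))
    (Ω : ℝ) (hΩ : Ω = (1 / n) * ∑ i, (1 - ζ i) ^ 2)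
    (βstar : Fin p → ℝ) (σsq : ℝ) (hσ : 0 ≤ σsq)
    (B : ℝ) (hB : B = ∑ i, lam i * ζ i ^ 2 * βstar i ^ 2)
    (γ : ℝ) (hγ0 : 0 ≤ γ) (hγ : γ ^ 2 = ((p : ℝ) / n) * (σsq + B) / (1 - Ω)) :
    (∫ g : Fin p → ℝ,
        ∑ i, (Real.sqrt (lam i) *
          ((lam i / (lam i + τ)) *
              (βstar i + (Real.sqrt (lam i))⁻¹ * (γ / Real.sqrt p) * g i)
            - βstar i)) ^ 2
      ∂(Measure.pi fun _ : Fin p => gaussianReal 0 1))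
      = B + γ ^ 2 * (∑ i, (lam i / (lam i + τ)) ^ 2) / p
    ∧ B + γ ^ 2 * (∑ i, (lam i / (lam i + τ)) ^ 2) / p = (σsq * Ω + B) / (1 - Ω) := by
  have hp0 : (0:ℝ) < (p:ℝ) := by exact_mod_cast Nat.lt_of_lt_of_le Nat.zero_lt_one hp
  have hlτ : ∀ i, 0 < lam i + τ := fun i => add_pos (hlam i) hτ
  have hcpos : ∀ i, 0 < lam i / (lam i + τ) := fun i => div_pos (hlam i) (hlτ i)
  have hclt : ∀ i, lam i / (lam i + τ) < 1 := fun i =>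
    (div_lt_one (hlτ i)).mpr (lt_add_of_pos_right _ hτ)
  have hζc : ∀ i, 1 - ζ i = lam i / (lam i + τ) := by
    intro i
    rw [hζ i, eq_div_iff (hlτ i).ne', sub_mul, div_mul_cancel₀ _ (hlτ i).ne']
    ring
  have hne : (Finset.univ : Finset (Fin p)).Nonempty := ⟨⟨0, hp⟩, Finset.mem_univ _⟩
  have hn0 : 0 < n := by
    rw [hn]
    exact Finset.sum_pos (fun i _ => hcpos i) hne
  have hSn : ∑ i, (1 - ζ i) ^ 2 < n := by
    rw [hn]
    refine Finset.sum_lt_sum_of_nonempty hne ?_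
    intro i _
    rw [hζc i]
    calc (lam i / (lam i + τ)) ^ 2 = (lam i / (lam i + τ)) * (lam i / (lam i + τ)) := sq _
      _ < (lam i / (lam i + τ)) * 1 := by
          exact mul_lt_mul_of_pos_left (hclt i) (hcpos i)
      _ = lam i / (lam i + τ) := mul_one _
  have hΩ1 : Ω < 1 := by
    rw [hΩ, one_div_mul_eq_div]
    exact (div_lt_one hn0).mpr hSn
  have h1Ω : (0:ℝ) < 1 - Ω := sub_pos.mpr hΩ1
  -- abbreviations
  set a : Fin p → ℝ := fun i =>
    Real.sqrt (lam i) * ((lam i / (lam i + τ)) * βstar i - βstar i) with ha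
  set b : Fin p → ℝ := fun i => (lam i / (lam i + τ)) * (γ / Real.sqrt p) with hb'
  have hrw : ∀ (i : Fin p) (x : ℝ),
      Real.sqrt (lam i) * ((lam i / (lam i + τ)) *
          (βstar i + (Real.sqrt (lam i))⁻¹ * (γ / Real.sqrt p) * x) - βstar i)
        = a i + b i * x := by
    intro i x
    have hs : Real.sqrt (lam i) ≠ 0 := ne_of_gt (Real.sqrt_pos.mpr (hlam i))
    have h1 : Real.sqrt (lam i) * (Real.sqrt (lam i))⁻¹ = 1 := mul_inv_cancel₀ hs
    rw [ha, hb']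
    calc Real.sqrt (lam i) * ((lam i / (lam i + τ)) *
            (βstar i + (Real.sqrt (lam i))⁻¹ * (γ / Real.sqrt p) * x) - βstar i)
        = (Real.sqrt (lam i) * (Real.sqrt (lam i))⁻¹)
            * ((lam i / (lam i + τ)) * (γ / Real.sqrt p) * x)
          + Real.sqrt (lam i) * ((lam i / (lam i + τ)) * βstar i - βstar i) := by ring
      _ = _ := by rw [h1]; ring
  have ha2 : ∀ i, a i ^ 2 = lam i * ζ i ^ 2 * βstar i ^ 2 := by
    intro i
    have h1 : ζ i = 1 - lam i / (lam i + τ) := by rw [← hζc i]; ring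
    rw [ha, h1, mul_pow, Real.sq_sqrt (hlam i).le]
    ring
  have hb2 : ∀ i, b i ^ 2 = (lam i / (lam i + τ)) ^ 2 * (γ ^ 2 / p) := by
    intro i
    rw [hb', mul_pow]
    congr 1
    rw [div_pow, Real.sq_sqrt hp0.le]
  have key1 : (∫ g : Fin p → ℝ,
        ∑ i, (Real.sqrt (lam i) *
          ((lam i / (lam i + τ)) *
              (βstar i + (Real.sqrt (lam i))⁻¹ * (γ / Real.sqrt p) * g i)
            - βstar i)) ^ 2
      ∂(Measure.pi fun _ : Fin p => gaussianReal 0 1))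
      = ∑ i, (a i ^ 2 + b i ^ 2) := by
    have hfun : (fun g : Fin p → ℝ =>
        ∑ i, (Real.sqrt (lam i) *
          ((lam i / (lam i + τ)) *
              (βstar i + (Real.sqrt (lam i))⁻¹ * (γ / Real.sqrt p) * g i)
            - βstar i)) ^ 2)
        = fun g : Fin p → ℝ => ∑ i, (a i + b i * g i) ^ 2 := by
      funext g
      exact Finset.sum_congr rfl fun i _ => by rw [hrw i (g i)]
    rw [hfun, integral_finset_sum _ (fun i _ => my_comp_integrable p i (a i) (b i))]
    exact Finset.sum_congr rfl fun i _ => my_comp_integral p i (a i) (b i)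
  have key2 : ∑ i, (a i ^ 2 + b i ^ 2)
      = B + γ ^ 2 * (∑ i, (lam i / (lam i + τ)) ^ 2) / p := by
    rw [Finset.sum_add_distrib, hB]
    congr 1
    · exact Finset.sum_congr rfl fun i _ => ha2 i
    · rw [Finset.sum_congr rfl fun i _ => hb2 i, ← Finset.sum_mul]
      ring
  have hcs : ∑ i, (lam i / (lam i + τ)) ^ 2 = Ω * n := by
    have h1 : ∑ i, (lam i / (lam i + τ)) ^ 2 = ∑ i, (1 - ζ i) ^ 2 :=
      Finset.sum_congr rfl fun i _ => by rw [hζc i]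
    rw [h1, hΩ]
    field_simp
  refine ⟨key1.trans key2, ?_⟩
  rw [hcs, hγ]
  field_simp
  ring
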